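/- Let α, σ ∈ ℝ with ασ > 0, σ ≠ 1 and 1 + 1/σ > 0, let K > 0 and C ∈ ℝ, and let q > 1/(ασ). Then the function u defined by u(q) = (Kσ/(σ−1))·((1+ασq)^{1−1/σ}/q)·[q − ((σ−1)/(ασ))·∑_{n=0}^∞ ((1)_n (1)_n/(1+1/σ)_n)·(−1/(ασq))^n/n!] + C is differentiable at q with derivative u′(q) = K·(1+ασq)^{1−1/σ}/q. (This is the CREMR utility, the β → 1 limit case of the LFRRA family.) -/

import Mathlib

open Filter Finset Topology

private lemma pochCREMR_pos {t : ℝ} (ht : 0 < 1 + t) (n : ℕ) :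
    0 < (ascPochhammer ℝ n).eval (1 + t) := by
  induction n with
  | zero => simp
  | succ n ih =>
    rw [ascPochhammer_succ_eval]
    have : (0:ℝ) < 1 + t + n := by positivity
    exact mul_pos ih this

private lemma aCREMR_pos {t : ℝ} (ht : 0 < 1 + t) (n : ℕ) :
    0 < (Nat.factorial n : ℝ) / (ascPochhammer ℝ n).eval (1 + t) := by
  have := pochCREMR_pos ht n
  have : (0:ℝ) < (Nat.factorial n : ℝ) := by positivity
  exact div_pos this (pochCREMR_pos ht n)

private lemma aCREMR_rec {t : ℝ} (ht : 0 < 1 + t) (n : ℕ) :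
    (Nat.factorial (n+1) : ℝ) / (ascPochhammer ℝ (n+1)).eval (1 + t)
      = ((n:ℝ) + 1) * ((Nat.factorial n : ℝ) / (ascPochhammer ℝ n).eval (1 + t)) / ((n:ℝ) + 1 + t) := by
  have hp := (pochCREMR_pos ht n).ne'
  have hd : ((n:ℝ) + 1 + t) ≠ 0 := by
    have : (0:ℝ) ≤ (n:ℝ) := Nat.cast_nonneg n
    intro h; linarith
  rw [ascPochhammer_succ_eval, Nat.factorial_succ]
  push_cast
  rw [div_eq_div_iff (by positivity) (by positivity)]
  field_simp
  ring

private lemma masterCREMR_summable {t : ℝ} (ht : 0 < 1 + t) {s : ℝ} (hs0 : 0 < s) (hs1 : s < 1) :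
    Summable (fun n : ℕ => ((n : ℝ) + 1) * ((Nat.factorial n : ℝ) / (ascPochhammer ℝ n).eval (1 + t)) * s ^ n) := by
  set a : ℕ → ℝ := fun n => (Nat.factorial n : ℝ) / (ascPochhammer ℝ n).eval (1 + t) with ha
  have hap : ∀ n, 0 < a n := aCREMR_pos ht
  have hMpos : ∀ n : ℕ, 0 < ((n:ℝ)+1) * a n * s ^ n := fun n => by
    have h1 : (0:ℝ) < (n:ℝ)+1 := by positivity
    have := hap n
    positivity
  apply summable_of_ratio_test_tendsto_lt_one hs1
    (Eventually.of_forall fun n => (hMpos n).ne')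
  have key : ∀ n : ℕ, ‖((n+1:ℕ):ℝ)*1‖ = 0 → True := fun _ _ => trivial
  have hden : ∀ n : ℕ, (0:ℝ) < (n:ℝ) + 1 + t := fun n => by
    have : (0:ℝ) ≤ (n:ℝ) := Nat.cast_nonneg n
    linarith
  have keq : ∀ n : ℕ, ‖(((n+1:ℕ):ℝ)+1) * a (n+1) * s ^ (n+1)‖ / ‖((n:ℝ)+1) * a n * s ^ n‖
      = s * (((n:ℝ)+2) / ((n:ℝ)+1+t)) := by
    intro n
    have h1 : a (n+1) = ((n:ℝ) + 1) * a n / ((n:ℝ) + 1 + t) := aCREMR_rec ht n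
    rw [Real.norm_eq_abs, Real.norm_eq_abs, abs_of_pos (hMpos (n+1)), abs_of_pos (hMpos n), h1]
    have h2 : ((n:ℝ)+1+t) ≠ 0 := (hden n).ne'
    have h3 : ((n:ℝ)+1) ≠ 0 := by positivity
    have h4 : s ^ n ≠ 0 := (pow_pos hs0 n).ne'
    have h5 : a n ≠ 0 := (hap n).ne'
    push_cast
    field_simp
    ring
  have hlim : Tendsto (fun n : ℕ => s * (((n:ℝ)+2) / ((n:ℝ)+1+t))) atTop (𝓝 s) := by
    have hd : Tendsto (fun n : ℕ => (n:ℝ) + 1 + t) atTop atTop := by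
      apply tendsto_atTop_add_const_right
      exact tendsto_atTop_add_const_right _ _ tendsto_natCast_atTop_atTop
    have h0 : Tendsto (fun n : ℕ => (1 - t) / ((n:ℝ)+1+t)) atTop (𝓝 0) :=
      Tendsto.div_atTop tendsto_const_nhds hd
    have h1 : Tendsto (fun n : ℕ => 1 + (1 - t) / ((n:ℝ)+1+t)) atTop (𝓝 1) := by
      simpa using tendsto_const_nhds.add h0
    have heq : ∀ n : ℕ, 1 + (1 - t) / ((n:ℝ)+1+t) = ((n:ℝ)+2) / ((n:ℝ)+1+t) := by
      intro n
      field_simp [(hden n).ne']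
      ring
    simpa [heq] using (tendsto_const_nhds.mul h1 : Tendsto (fun n : ℕ => s * (1 + (1-t)/((n:ℝ)+1+t))) atTop (𝓝 (s*1)))
  exact Tendsto.congr (fun n => (keq n).symm) hlim

set_option maxHeartbeats 1600000 in
/-- The CREMR utility (the `β → 1` limit case of the LFRRA
family) has marginal utility `K·(1+ασq)^(1−1/σ)/q` at any `q > 1/(ασ)`. -/
theorem cremr_utility_hasDerivAt
    (α σ K C q : ℝ) (hασ : 0 < α * σ) (hσ1 : σ ≠ 1) (hσ : 0 < 1 + 1/σ)
    (hK : 0 < K) (hq : 1 / (α * σ) < q) :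
    HasDerivAt (fun x : ℝ =>
        (K * σ / (σ - 1)) * ((1 + α * σ * x) ^ (1 - 1/σ) / x) *
          (x - ((σ - 1) / (α * σ)) *
            ∑' (n : ℕ), ((ascPochhammer ℝ n).eval 1 * (ascPochhammer ℝ n).eval 1 /
              (ascPochhammer ℝ n).eval (1 + 1/σ)) * (-(1 / (α * σ * x))) ^ n /
                (Nat.factorial n : ℝ)) + C)
      (K * (1 + α * σ * q) ^ (1 - 1/σ) / q) q := by
  -- basic positivity facts
  have hσ0 : σ ≠ 0 := by rintro rfl; simp at hασ
  set a : ℕ → ℝ := fun n => (Nat.factorial n : ℝ) / (ascPochhammer ℝ n).eval (1 + 1/σ) with ha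
  have hap : ∀ n, 0 < a n := aCREMR_pos hσ
  have hL : 0 < 1 / (α * σ) := by positivity
  have hq0 : 0 < q := lt_trans hL hq
  have hw : 1 < α * σ * q := by
    rw [div_lt_iff₀ hασ] at hq
    linarith [hq]
  have h1z : (0:ℝ) < 1 + α * σ * q := by linarith
  -- step 1 : rewrite the function
  have hfun : (fun x : ℝ =>
        (K * σ / (σ - 1)) * ((1 + α * σ * x) ^ (1 - 1/σ) / x) *
          (x - ((σ - 1) / (α * σ)) *
            ∑' (n : ℕ), ((ascPochhammer ℝ n).eval 1 * (ascPochhammer ℝ n).eval 1 /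
              (ascPochhammer ℝ n).eval (1 + 1/σ)) * (-(1 / (α * σ * x))) ^ n /
                (Nat.factorial n : ℝ)) + C)
      = (fun x : ℝ =>
        (K * σ / (σ - 1)) * ((1 + α * σ * x) ^ (1 - 1/σ) / x) *
          (x - ((σ - 1) / (α * σ)) * ∑' (n : ℕ), a n * (-(1 / (α * σ * x))) ^ n) + C) := by
    funext x
    have hterm : ∀ (n:ℕ) (w:ℝ), ((ascPochhammer ℝ n).eval 1 * (ascPochhammer ℝ n).eval 1 /
        (ascPochhammer ℝ n).eval (1 + 1/σ)) * w ^ n / (Nat.factorial n : ℝ)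
        = a n * w ^ n := by
      intro n w
      rw [ascPochhammer_eval_one]
      have h1 : (Nat.factorial n : ℝ) ≠ 0 := by positivity
      have h2 : (ascPochhammer ℝ n).eval (1+1/σ) ≠ 0 := (pochCREMR_pos hσ n).ne'
      show (Nat.factorial n : ℝ) * (Nat.factorial n : ℝ) / (ascPochhammer ℝ n).eval (1+1/σ) * w ^ n / (Nat.factorial n : ℝ)
        = (Nat.factorial n : ℝ) / (ascPochhammer ℝ n).eval (1+1/σ) * w ^ n
      generalize (ascPochhammer ℝ n).eval (1 + 1/σ) = P at h2 ⊢
      field_simp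
    simp only [hterm]
  rw [hfun]
  -- step 2 : derivative of the series
  set m : ℝ := (1/(α*σ) + q)/2 with hm
  have hm1 : 1/(α*σ) < m := by rw [hm]; linarith
  have hm2 : m < q := by rw [hm]; linarith
  have hm0 : 0 < m := lt_trans hL hm1
  set ρ : ℝ := 1/(α*σ*m) with hρ
  have hρ0 : 0 < ρ := by positivity
  have hρ1 : ρ < 1 := by
    rw [hρ, div_lt_one (by positivity)]
    rw [div_lt_iff₀ hασ] at hm1
    linarith
  have hqm : q ∈ Set.Ioi m := hm2
  -- derivative of z at y ∈ Ioi m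
  have hz : ∀ y : ℝ, y ∈ Set.Ioi m → HasDerivAt (fun x : ℝ => -(1 / (α * σ * x)))
      (1/(α*σ*y^2)) y := by
    intro y hy
    have hy0 : 0 < y := lt_trans hm0 hy
    have hbase : HasDerivAt (fun x : ℝ => α * σ * x) (α * σ) y := by
      simpa using (hasDerivAt_id y).const_mul (α*σ)
    have h2 : HasDerivAt (fun x : ℝ => (α * σ * x)⁻¹) (-(α*σ)/(α*σ*y)^2) y :=
      hbase.inv (by positivity)
    have h3 := h2.neg
    have : -(-(α*σ)/(α*σ*y)^2) = 1/(α*σ*y^2) := by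
      field_simp
    rw [this] at h3
    simpa [one_div, Pi.neg_def] using h3
  -- summable bound for the derivatives
  set u : ℕ → ℝ := fun n => (1/(α*σ*m^2*ρ)) * (((n:ℝ)+1) * a n * ρ^n) with hu_def
  have hu : Summable u := (masterCREMR_summable hσ hρ0 hρ1).mul_left _
  have hg : ∀ (n:ℕ) (y:ℝ), y ∈ Set.Ioi m →
      HasDerivAt (fun x : ℝ => a n * (-(1/(α*σ*x)))^n)
        (a n * ((n:ℝ) * (-(1/(α*σ*y)))^(n-1) * (1/(α*σ*y^2)))) y :=
    fun n y hy => ((hz y hy).pow n).const_mul (a n)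
  have hg' : ∀ (n:ℕ) (y:ℝ), y ∈ Set.Ioi m →
      ‖a n * ((n:ℝ) * (-(1/(α*σ*y)))^(n-1) * (1/(α*σ*y^2)))‖ ≤ u n := by
    intro n y hy
    have hy0 : 0 < y := lt_trans hm0 hy
    have hmy : m ≤ y := le_of_lt hy
    have hz1 : |(-(1/(α*σ*y)))| ≤ ρ := by
      rw [abs_neg, abs_of_pos (by positivity : (0:ℝ) < 1/(α*σ*y)), hρ]
      gcongr
    have step1 : ‖a n * ((n:ℝ) * (-(1/(α*σ*y)))^(n-1) * (1/(α*σ*y^2)))‖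
        = a n * ((n:ℝ) * |(-(1/(α*σ*y)))|^(n-1) * (1/(α*σ*y^2))) := by
      rw [Real.norm_eq_abs, abs_mul, abs_mul, abs_mul, abs_pow,
        abs_of_pos (hap n), Nat.abs_cast, abs_of_pos (by positivity : (0:ℝ) < 1/(α*σ*y^2))]
    rw [step1]
    have step2 : a n * ((n:ℝ) * |(-(1/(α*σ*y)))|^(n-1) * (1/(α*σ*y^2)))
        ≤ a n * ((n:ℝ) * ρ^(n-1) * (1/(α*σ*m^2))) := by
      have hX : |(-(1/(α*σ*y)))|^(n-1) ≤ ρ^(n-1) := pow_le_pow_left₀ (abs_nonneg _) hz1 _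
      have hd : 1/(α*σ*y^2) ≤ 1/(α*σ*m^2) := by
        apply one_div_le_one_div_of_le (by positivity)
        have : m^2 ≤ y^2 := pow_le_pow_left₀ hm0.le hmy 2
        exact mul_le_mul_of_nonneg_left this hασ.le
      have h1 : (n:ℝ) * |(-(1/(α*σ*y)))|^(n-1) ≤ (n:ℝ) * ρ^(n-1) :=
        mul_le_mul_of_nonneg_left hX (Nat.cast_nonneg n)
      have h2 := mul_le_mul h1 hd (by positivity) (by positivity)
      exact mul_le_mul_of_nonneg_left h2 (hap n).le
    refine le_trans step2 ?_
    rw [hu_def]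
    cases n with
    | zero =>
      simp only [Nat.cast_zero, zero_mul, mul_zero]
      have := hap 0
      positivity
    | succ k =>
      simp only [Nat.add_sub_cancel]
      have hkey : ((k:ℝ)+1) * ρ^k ≤ ((k:ℝ)+1+1) * ρ^k := by
        have : (0:ℝ) ≤ ρ^k := le_of_lt (pow_pos hρ0 k)
        nlinarith
      have hexp : (1/(α*σ*m^2*ρ)) * ((((k:ℕ):ℝ)+1+1) * a (k+1) * ρ^(k+1))
          = a (k+1) * ((((k:ℕ):ℝ)+1+1) * ρ^k * (1/(α*σ*m^2))) := by
        rw [pow_succ]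
        field_simp
        ring
      push_cast
      push_cast at hexp
      rw [hexp]
      have h1 := hap (k+1)
      have h2 : (0:ℝ) < 1/(α*σ*m^2) := by positivity
      exact mul_le_mul_of_nonneg_left (mul_le_mul_of_nonneg_right hkey h2.le) h1.le
  -- summability at the point q
  have hZ1 : |(-(1/(α*σ*q)))| < 1 := by
    rw [abs_neg, abs_of_pos (by positivity : (0:ℝ) < 1/(α*σ*q)), div_lt_one (by positivity)]
    linarith
  have hZ0 : (0:ℝ) < |(-(1/(α*σ*q)))| := by
    rw [abs_neg, abs_of_pos (by positivity : (0:ℝ) < 1/(α*σ*q))]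
    positivity
  have hgq0 : Summable (fun n : ℕ => a n * (-(1/(α*σ*q)))^n) := by
    refine Summable.of_norm_bounded (masterCREMR_summable hσ hZ0 hZ1) ?_
    intro n
    rw [Real.norm_eq_abs, abs_mul, abs_pow, abs_of_pos (hap n)]
    have h1 := hap n
    have h2 : (0:ℝ) ≤ |(-(1/(α*σ*q)))|^n := pow_nonneg (abs_nonneg _) n
    nlinarith [mul_nonneg (mul_nonneg (Nat.cast_nonneg n : (0:ℝ) ≤ n) h1.le) h2]
  have hder : HasDerivAt (fun x : ℝ => ∑' n : ℕ, a n * (-(1/(α*σ*x)))^n)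
      (∑' n : ℕ, a n * ((n:ℝ) * (-(1/(α*σ*q)))^(n-1) * (1/(α*σ*q^2)))) q :=
    hasDerivAt_tsum_of_isPreconnected hu isOpen_Ioi isPreconnected_Ioi hg hg' hqm hgq0 hqm
  -- outer assembly
  have hbase : HasDerivAt (fun x : ℝ => 1 + α*σ*x) (α*σ) q := by
    simpa using ((hasDerivAt_id q).const_mul (α*σ)).const_add 1
  have hP : HasDerivAt (fun x : ℝ => (1+α*σ*x)^(1-1/σ))
      ((1-1/σ) * (1+α*σ*q)^((1-1/σ)-1) * (α*σ)) q := by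
    have := hbase.rpow_const (p := 1-1/σ) (Or.inl h1z.ne')
    convert this using 1
    ring
  have hdiv : HasDerivAt (fun x : ℝ => (1+α*σ*x)^(1-1/σ)/x)
      ((((1-1/σ) * (1+α*σ*q)^((1-1/σ)-1) * (α*σ)) * q - (1+α*σ*q)^(1-1/σ) * 1)/q^2) q :=
    hP.div (hasDerivAt_id q) hq0.ne'
  have hsub : HasDerivAt (fun x : ℝ => x - ((σ-1)/(α*σ)) * ∑' n : ℕ, a n * (-(1/(α*σ*x)))^n)
      (1 - ((σ-1)/(α*σ)) * ∑' n : ℕ, a n * ((n:ℝ) * (-(1/(α*σ*q)))^(n-1) * (1/(α*σ*q^2)))) q :=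
    (hasDerivAt_id q).sub (hder.const_mul _)
  have hmain := ((hdiv.mul hsub).const_mul (K*σ/(σ-1))).add_const C
  convert hmain using 1
  · rfl
  · rfl
  · funext x
    simp only [Pi.mul_apply]
    ring
  -- now the value identity
  -- notation
  set S : ℝ := ∑' n : ℕ, a n * (-(1/(α*σ*q)))^n with hS
  set T0 : ℝ := ∑' n : ℕ, a n * ((n:ℝ) * (-(1/(α*σ*q)))^(n-1)) with hT0
  -- relation between full derivative tsum and T0
  have hTrel : (∑' n : ℕ, a n * ((n:ℝ) * (-(1/(α*σ*q)))^(n-1) * (1/(α*σ*q^2))))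
      = T0 * (1/(α*σ*q^2)) := by
    rw [hT0, ← tsum_mul_right]
    exact tsum_congr fun n => by ring
  -- summability facts
  have hTs : Summable (fun n : ℕ => a n * ((n:ℝ) * (-(1/(α*σ*q)))^(n-1) * (1/(α*σ*q^2)))) :=
    Summable.of_norm_bounded hu (fun n => hg' n q hqm)
  have hT0s : Summable (fun n : ℕ => a n * ((n:ℝ) * (-(1/(α*σ*q)))^(n-1))) := by
    refine (hTs.mul_right (α*σ*q^2)).congr fun n => ?_
    have hne : α*σ*q^2 ≠ 0 := by positivity
    show a n * ((n:ℝ) * (-(1/(α*σ*q)))^(n-1) * (1/(α*σ*q^2))) * (α*σ*q^2) = a n * ((n:ℝ) * (-(1/(α*σ*q)))^(n-1))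
    rw [mul_assoc (a n), mul_assoc _ (1/(α*σ*q^2)), one_div_mul_cancel hne, mul_one]
  have hSsum : HasSum (fun n : ℕ => a n * (-(1/(α*σ*q)))^n) S := hgq0.hasSum
  have hT0sum : HasSum (fun n : ℕ => a n * ((n:ℝ) * (-(1/(α*σ*q)))^(n-1))) T0 := hT0s.hasSum
  -- the hypergeometric ODE identity via telescoping
  set Z : ℝ := -(1/(α*σ*q)) with hZdef
  set b : ℕ → ℝ := fun n => (σ*(n:ℝ)+1) * a n * Z^n with hb
  have ha0 : a 0 = 1 := by
    simp only [ha, ascPochhammer_zero, Polynomial.eval_one, Nat.factorial_zero, Nat.cast_one,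
      div_one]
  have harec : ∀ n : ℕ, a (n+1) = ((n:ℝ)+1) * a n / ((n:ℝ)+1+1/σ) := by
    intro n
    simp only [ha]
    exact aCREMR_rec hσ n
  have hden : ∀ n : ℕ, ((n:ℝ)+1+1/σ) ≠ 0 := by
    intro n
    have h1 : (0:ℝ) ≤ (n:ℝ) := Nat.cast_nonneg n
    intro h
    have : (n:ℝ) + 1 + 1/σ = (n:ℝ) + (1 + 1/σ) := by ring
    rw [this] at h
    linarith
  have hden2 : ∀ n : ℕ, (n:ℝ)*σ + σ + 1 ≠ 0 := by
    intro n h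
    have h1 : (0:ℝ) ≤ (n:ℝ) := Nat.cast_nonneg n
    have h2 : ((n:ℝ)+1+1/σ) * σ = (n:ℝ)*σ + σ + 1 := by
      field_simp
    have := mul_ne_zero (hden n) hσ0
    rw [h2] at this
    exact this h
  have harec2 : ∀ n : ℕ, a (n+1) = ((n:ℝ)+1) * σ * a n / ((n:ℝ)*σ+σ+1) := by
    intro n
    rw [harec n]
    rw [div_eq_div_iff (hden n) (hden2 n)]
    field_simp
  have hcombo : HasSum (fun n : ℕ => (σ*Z*(1-Z)) * (a n * ((n:ℝ)*Z^(n-1)))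
      + (1-σ*Z) * (a n * Z^n)) ((σ*Z*(1-Z))*T0 + (1-σ*Z)*S) :=
    (hT0sum.mul_left _).add (hSsum.mul_left _)
  have termeq : ∀ n : ℕ, (σ*Z*(1-Z)) * (a n * ((n:ℝ)*Z^(n-1))) + (1-σ*Z) * (a n * Z^n)
      = b n - b (n+1) := by
    intro n
    have hd0 : σ + 1 ≠ 0 := by
      have := hden2 0
      simpa using this
    cases n with
    | zero =>
      simp only [hb]
      simp only [Nat.cast_zero, Nat.cast_one, pow_zero, pow_one, zero_mul, mul_zero, Nat.zero_add]
      rw [harec2 0, ha0]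
      field_simp
      simp only [Nat.cast_zero, zero_add, mul_one]
      rw [mul_div_assoc, div_self hd0, mul_one]
    | succ k =>
      simp only [hb, Nat.add_sub_cancel]
      rw [show k+1+1 = (k+1)+1 from rfl, harec2 (k+1)]
      have hdk := hden2 (k+1)
      push_cast at hdk ⊢
      generalize hD : ((k:ℝ)+1)*σ+σ+1 = D at hdk ⊢
      field_simp
      subst hD
      ring
  simp only [termeq] at hcombo
  have hbz : Tendsto b atTop (𝓝 0) := by
    apply squeeze_zero_norm (a := fun n : ℕ => (|σ|+1) * (((n:ℝ)+1) * a n * |Z|^n))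
    · intro n
      simp only [hb]
      rw [Real.norm_eq_abs, abs_mul, abs_mul, abs_pow, abs_of_pos (hap n)]
      have h1 : |σ*(n:ℝ)+1| ≤ (|σ|+1) * ((n:ℝ)+1) := by
        have h2 : |σ*(n:ℝ)+1| ≤ |σ| * (n:ℝ) + 1 := by
          calc (|σ*(n:ℝ)+1|) ≤ |σ*(n:ℝ)| + |(1:ℝ)| := abs_add_le _ _
          _ = |σ| * (n:ℝ) + 1 := by rw [abs_mul, Nat.abs_cast, abs_one]
        have h3 : (0:ℝ) ≤ (n:ℝ) := Nat.cast_nonneg n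
        have h4 : (0:ℝ) ≤ |σ| := abs_nonneg σ
        nlinarith
      have h5 : (0:ℝ) ≤ a n * |Z|^n := mul_nonneg (hap n).le (pow_nonneg (abs_nonneg _) n)
      calc (|σ*(n:ℝ)+1| * a n * |Z|^n) = |σ*(n:ℝ)+1| * (a n * |Z|^n) := by ring
        _ ≤ ((|σ|+1) * ((n:ℝ)+1)) * (a n * |Z|^n) := mul_le_mul_of_nonneg_right h1 h5
        _ = (|σ|+1) * (((n:ℝ)+1) * a n * |Z|^n) := by ring
    · have h6 := ((masterCREMR_summable hσ hZ0 hZ1).tendsto_atTop_zero).const_mul (|σ|+1)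
      rw [mul_zero] at h6
      exact h6
  have hb0 : b 0 = 1 := by simp only [hb]; simp [ha0]
  have hsum1 : Tendsto (fun N : ℕ => ∑ i ∈ range N, (b i - b (i+1))) atTop (𝓝 1) := by
    have heq : ∀ N : ℕ, ∑ i ∈ range N, (b i - b (i+1)) = b 0 - b N :=
      fun N => Finset.sum_range_sub' b N
    simp only [heq, hb0]
    simpa using tendsto_const_nhds.sub hbz
  have hid : (σ*Z*(1-Z))*T0 + (1-σ*Z)*S = 1 :=
    tendsto_nhds_unique hcombo.tendsto_sum_nat hsum1
  -- clear denominators in the identity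
  have hwne : α*σ*q ≠ 0 := by positivity
  have hid2 : (α*σ*q+σ)*(α*σ*q)*S - σ*(α*σ*q+1)*T0 = (α*σ*q)^2 := by
    rw [hZdef] at hid
    have hα : α ≠ 0 := by
      intro h
      rw [h] at hασ
      simp at hασ
    have hvw : (1/(α*σ*q)) * (α*σ*q) = 1 := one_div_mul_cancel hwne
    linear_combination (α*σ*q)^2 * hid + (-σ*(α*σ*q)*S + σ*T0*((α*σ*q)*(1/(α*σ*q)) + 1 + α*σ*q)) * hvw
  -- final algebra
  rw [hTrel]
  have hPA : (1+α*σ*q)^((1-1/σ)-1) * (1+α*σ*q) = (1+α*σ*q)^(1-1/σ) := by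
    rw [← Real.rpow_add_one h1z.ne' ((1-1/σ)-1)]
    congr 1
    ring
  rw [← hPA]
  have hσ1' : σ - 1 ≠ 0 := sub_ne_zero.mpr hσ1
  have hT0v : T0 = ((α*σ*q+σ)*(α*σ*q)*S - (α*σ*q)^2)/(σ*(α*σ*q+1)) := by
    have hne2 : σ*(α*σ*q+1) ≠ 0 := by
      apply mul_ne_zero hσ0
      intro h
      have : α*σ*q = -1 := by linarith
      rw [this] at hw
      norm_num at hw
    rw [eq_div_iff hne2]
    linear_combination -hid2
  rw [hT0v]
  have hne2 : α*σ*q+1 ≠ 0 := by intro h; nlinarith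
  have hα0 : α ≠ 0 := by rintro rfl; simp at hασ
  field_simp
  ring
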